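/- Let b, s be independent with the buyer distribution F_B first-order stochastically dominating the seller distribution F_S, and let p be an independent fresh sample from F_B. Then E[(b-s)·1[b ≥ p ≥ s]] ≥ (1/4)·E[(b-s)·1[b > s]]. -/

import Mathlib

open MeasureTheory

section Aux

lemma aux_prob : IsProbabilityMeasure ((volume : Measure ℝ).restrict (Set.Ioo (0:ℝ) 1)) := by
  constructor
  rw [Measure.restrict_apply_univ, Real.volume_Ioo]
  norm_num

lemma aux_perm_integral (μ : Measure ℝ) [SigmaFinite μ] (e : Fin 3 ≃ Fin 3)
    (g : (Fin 3 → ℝ) → ℝ) :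
    ∫ q : Fin 3 → ℝ, g (fun j => q (e.symm j)) ∂(Measure.pi fun _ => μ)
      = ∫ q : Fin 3 → ℝ, g q ∂(Measure.pi fun _ => μ) := by
  have h := (MeasureTheory.measurePreserving_piCongrLeft (fun _ : Fin 3 => μ) e).integral_comp
      (MeasurableEquiv.measurableEmbedding _) g
  have key : ∀ x : Fin 3 → ℝ,
      (MeasurableEquiv.piCongrLeft (fun _ : Fin 3 => ℝ) e x) = fun j => x (e.symm j) := by
    intro x; funext j
    have h2 := MeasurableEquiv.piCongrLeft_apply_apply e (β := fun _ : Fin 3 => ℝ) x (e.symm j)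
    simpa using h2
  simp_rw [key] at h
  exact h

lemma aux_map_eval (μ : Measure ℝ) [IsProbabilityMeasure μ] (i : Fin 3) :
    (Measure.pi fun _ : Fin 3 => μ).map (fun q => q i) = μ := by
  apply Measure.ext; intro s hs
  rw [Measure.map_apply (measurable_pi_apply i) hs]
  have hpre : (fun q : Fin 3 → ℝ => q i) ⁻¹' s
      = Set.pi Set.univ (Function.update (fun _ : Fin 3 => (Set.univ : Set ℝ)) i s) := by
    ext q
    simp only [Set.mem_preimage, Set.mem_univ_pi]
    constructor
    · intro h j
      by_cases hj : j = i
      · subst hj; simpa using h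
      · simp [Function.update_of_ne hj]
    · intro h
      have := h i
      simpa using this
  rw [hpre, Measure.pi_pi]
  rw [Finset.prod_eq_single i]
  · simp
  · intro j _ hj
    simp [Function.update_of_ne hj]
  · simp

lemma aux_integrable_eval {μ : Measure ℝ} [IsProbabilityMeasure μ] {f : ℝ → ℝ}
    (hf : Integrable f μ) (i : Fin 3) :
    Integrable (fun q : Fin 3 → ℝ => f (q i)) (Measure.pi fun _ => μ) := by
  rw [← aux_map_eval μ i] at hf
  exact (integrable_map_measure hf.aestronglyMeasurable
    (measurable_pi_apply i).aemeasurable).mp hf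

end Aux

/-- Under FSD (quantile function `v_B` of `F_B` pointwise dominates `v_S` of `F_S`), with
`b = v_B (q 0)`, `s = v_S (q 1)` independent and `p = v_B (q 2)` an independent fresh sample
from `F_B` (the `q i` i.i.d. uniform on `(0,1)`), pricing at the sample obtains at least a
quarter of the optimal gains from trade: `E[(b-s)·1[b ≥ p ≥ s]] ≥ (1/4)·E[(b-s)·1[b > s]]`. -/
theorem sample_pricing_fsd_quarter (vB vS : ℝ → ℝ) (hB : Monotone vB) (hS : Monotone vS)
    (hdom : ∀ x : ℝ, vS x ≤ vB x)
    (hIB : Integrable vB ((volume : Measure ℝ).restrict (Set.Ioo 0 1)))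
    (hIS : Integrable vS ((volume : Measure ℝ).restrict (Set.Ioo 0 1))) :
    (1 / 4 : ℝ) * ∫ q : Fin 3 → ℝ,
        (if vB (q 0) > vS (q 1) then vB (q 0) - vS (q 1) else 0)
        ∂(Measure.pi fun _ => (volume : Measure ℝ).restrict (Set.Ioo 0 1))
      ≤ ∫ q : Fin 3 → ℝ,
          (if vB (q 0) ≥ vB (q 2) ∧ vB (q 2) ≥ vS (q 1) then vB (q 0) - vS (q 1) else 0)
          ∂(Measure.pi fun _ => (volume : Measure ℝ).restrict (Set.Ioo 0 1)) := by
  have hprob : IsProbabilityMeasure ((volume : Measure ℝ).restrict (Set.Ioo (0:ℝ) 1)) := aux_prob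
  set μ := (volume : Measure ℝ).restrict (Set.Ioo (0:ℝ) 1) with hμ
  set π := (Measure.pi fun _ : Fin 3 => μ) with hπ
  -- the six integrands
  set A : (Fin 3 → ℝ) → ℝ :=
    fun q => if vB (q 0) ≥ vB (q 2) ∧ vB (q 2) ≥ vS (q 1) then vB (q 0) - vS (q 1) else 0
    with hA
  set A' : (Fin 3 → ℝ) → ℝ :=
    fun q => if vB (q 2) ≥ vB (q 0) ∧ vB (q 0) ≥ vS (q 1) then vB (q 2) - vS (q 1) else 0
    with hA'
  set P : (Fin 3 → ℝ) → ℝ :=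
    fun q => if q 1 ≤ q 2 ∧ vB (q 0) > vS (q 1) then vB (q 0) - vS (q 1) else 0 with hP
  set P' : (Fin 3 → ℝ) → ℝ :=
    fun q => if q 2 ≤ q 1 ∧ vB (q 0) > vS (q 2) then vB (q 0) - vS (q 2) else 0 with hP'
  set Opt : (Fin 3 → ℝ) → ℝ :=
    fun q => if vB (q 0) > vS (q 1) then vB (q 0) - vS (q 1) else 0 with hOpt
  set Opt' : (Fin 3 → ℝ) → ℝ :=
    fun q => if vB (q 0) > vS (q 2) then vB (q 0) - vS (q 2) else 0 with hOpt'
  -- measurability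
  have mB : Measurable vB := hB.measurable
  have mS : Measurable vS := hS.measurable
  have mB0 : Measurable fun q : Fin 3 → ℝ => vB (q 0) := mB.comp (measurable_pi_apply 0)
  have mB2 : Measurable fun q : Fin 3 → ℝ => vB (q 2) := mB.comp (measurable_pi_apply 2)
  have mS1 : Measurable fun q : Fin 3 → ℝ => vS (q 1) := mS.comp (measurable_pi_apply 1)
  have mS2 : Measurable fun q : Fin 3 → ℝ => vS (q 2) := mS.comp (measurable_pi_apply 2)
  have mA : Measurable A :=
    Measurable.ite ((measurableSet_le mB2 mB0).inter (measurableSet_le mS1 mB2))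
      (mB0.sub mS1) measurable_const
  have mA' : Measurable A' :=
    Measurable.ite ((measurableSet_le mB0 mB2).inter (measurableSet_le mS1 mB0))
      (mB2.sub mS1) measurable_const
  have mP : Measurable P :=
    Measurable.ite
      ((measurableSet_le (measurable_pi_apply 1) (measurable_pi_apply 2)).inter
        (measurableSet_lt mS1 mB0)) (mB0.sub mS1) measurable_const
  have mP' : Measurable P' :=
    Measurable.ite
      ((measurableSet_le (measurable_pi_apply 2) (measurable_pi_apply 1)).inter
        (measurableSet_lt mS2 mB0)) (mB0.sub mS2) measurable_const
  have mOpt : Measurable Opt :=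
    Measurable.ite (measurableSet_lt mS1 mB0) (mB0.sub mS1) measurable_const
  have mOpt' : Measurable Opt' :=
    Measurable.ite (measurableSet_lt mS2 mB0) (mB0.sub mS2) measurable_const
  -- integrability via a common dominating function
  set D : (Fin 3 → ℝ) → ℝ :=
    fun q => (|vB (q 0)| + |vS (q 1)|) + (|vB (q 2)| + |vS (q 2)|) with hD
  have hID : Integrable D π :=
    ((aux_integrable_eval hIB.abs 0).add (aux_integrable_eval hIS.abs 1)).add
      ((aux_integrable_eval hIB.abs 2).add (aux_integrable_eval hIS.abs 2))
  have hbound : ∀ (c : (Fin 3 → ℝ) → Prop) [DecidablePred c] (u v : Fin 3),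
      ∀ q : Fin 3 → ℝ,
      ‖(if c q then vB (q u) - vS (q v) else 0)‖ ≤ |vB (q u)| + |vS (q v)| := by
    intro c _ u v q
    rw [Real.norm_eq_abs]
    split_ifs with h
    · exact abs_sub _ _
    · simp only [abs_zero]
      positivity
  have habs3 : ∀ q : Fin 3 → ℝ, |vB (q 0)| ≤ |vB (q 0)| := fun _ => le_rfl
  have hDle : ∀ (u v : Fin 3), u = 0 ∨ u = 2 → v = 1 ∨ v = 2 →
      ∀ q : Fin 3 → ℝ, |vB (q u)| + |vS (q v)| ≤ D q := by
    intro u v hu hv q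
    have h1 : (0:ℝ) ≤ |vB (q 0)| := abs_nonneg _
    have h2 : (0:ℝ) ≤ |vS (q 1)| := abs_nonneg _
    have h3 : (0:ℝ) ≤ |vB (q 2)| := abs_nonneg _
    have h4 : (0:ℝ) ≤ |vS (q 2)| := abs_nonneg _
    rcases hu with rfl | rfl <;> rcases hv with rfl | rfl <;> simp only [hD] <;> linarith
  have hIA : Integrable A π := by
    refine hID.mono' mA.aestronglyMeasurable (ae_of_all _ fun q => ?_)
    refine le_trans ?_ (hDle 0 1 (Or.inl rfl) (Or.inl rfl) q)
    simp only [hA]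
    exact hbound (fun q => vB (q 0) ≥ vB (q 2) ∧ vB (q 2) ≥ vS (q 1)) 0 1 q
  have hIA' : Integrable A' π := by
    refine hID.mono' mA'.aestronglyMeasurable (ae_of_all _ fun q => ?_)
    refine le_trans ?_ (hDle 2 1 (Or.inr rfl) (Or.inl rfl) q)
    simp only [hA']
    exact hbound (fun q => vB (q 2) ≥ vB (q 0) ∧ vB (q 0) ≥ vS (q 1)) 2 1 q
  have hIP : Integrable P π := by
    refine hID.mono' mP.aestronglyMeasurable (ae_of_all _ fun q => ?_)
    refine le_trans ?_ (hDle 0 1 (Or.inl rfl) (Or.inl rfl) q)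
    simp only [hP]
    exact hbound (fun q => q 1 ≤ q 2 ∧ vB (q 0) > vS (q 1)) 0 1 q
  have hIP' : Integrable P' π := by
    refine hID.mono' mP'.aestronglyMeasurable (ae_of_all _ fun q => ?_)
    refine le_trans ?_ (hDle 0 2 (Or.inl rfl) (Or.inr rfl) q)
    simp only [hP']
    exact hbound (fun q => q 2 ≤ q 1 ∧ vB (q 0) > vS (q 2)) 0 2 q
  have hIOpt : Integrable Opt π := by
    refine hID.mono' mOpt.aestronglyMeasurable (ae_of_all _ fun q => ?_)
    refine le_trans ?_ (hDle 0 1 (Or.inl rfl) (Or.inl rfl) q)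
    simp only [hOpt]
    exact hbound (fun q => vB (q 0) > vS (q 1)) 0 1 q
  have hIOpt' : Integrable Opt' π := by
    refine hID.mono' mOpt'.aestronglyMeasurable (ae_of_all _ fun q => ?_)
    refine le_trans ?_ (hDle 0 2 (Or.inl rfl) (Or.inr rfl) q)
    simp only [hOpt']
    exact hbound (fun q => vB (q 0) > vS (q 2)) 0 2 q
  -- nonnegativity of each integrand
  have hA0 : ∀ q, 0 ≤ A q := by
    intro q; rw [hA]; dsimp only; split_ifs with h
    · have h1 := h.1; have h2 := h.2; linarith
    · exact le_rfl
  have hA'0 : ∀ q, 0 ≤ A' q := by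
    intro q; rw [hA']; dsimp only; split_ifs with h
    · have h1 := h.1; have h2 := h.2; linarith
    · exact le_rfl
  have hP0 : ∀ q, 0 ≤ P q := by
    intro q; rw [hP]; dsimp only; split_ifs with h
    · have h2 := h.2; linarith
    · exact le_rfl
  have hP'0 : ∀ q, 0 ≤ P' q := by
    intro q; rw [hP']; dsimp only; split_ifs with h
    · have h2 := h.2; linarith
    · exact le_rfl
  -- permutation identities
  have hswapA : ∫ q, A' q ∂π = ∫ q, A q ∂π := by
    have h := aux_perm_integral μ (Equiv.swap 0 2) A
    rw [← h]
    apply integral_congr_ae; apply ae_of_all; intro q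
    have e0 : (Equiv.swap (0:Fin 3) 2).symm 0 = 2 := by decide
    have e1 : (Equiv.swap (0:Fin 3) 2).symm 1 = 1 := by decide
    have e2 : (Equiv.swap (0:Fin 3) 2).symm 2 = 0 := by decide
    rw [hA, hA']
    dsimp only
    simp only [e0, e1, e2]
  have hswapP : ∫ q, P' q ∂π = ∫ q, P q ∂π := by
    have h := aux_perm_integral μ (Equiv.swap 1 2) P
    rw [← h]
    apply integral_congr_ae; apply ae_of_all; intro q
    have e0 : (Equiv.swap (1:Fin 3) 2).symm 0 = 0 := by decide
    have e1 : (Equiv.swap (1:Fin 3) 2).symm 1 = 2 := by decide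
    have e2 : (Equiv.swap (1:Fin 3) 2).symm 2 = 1 := by decide
    rw [hP, hP']
    dsimp only
    simp only [e0, e1, e2]
  have hswapO : ∫ q, Opt' q ∂π = ∫ q, Opt q ∂π := by
    have h := aux_perm_integral μ (Equiv.swap 1 2) Opt
    rw [← h]
    apply integral_congr_ae; apply ae_of_all; intro q
    have e0 : (Equiv.swap (1:Fin 3) 2).symm 0 = 0 := by decide
    have e1 : (Equiv.swap (1:Fin 3) 2).symm 1 = 2 := by decide
    rw [hOpt, hOpt']
    dsimp only
    simp only [e0, e1]
  -- pointwise inequality 1 : P ≤ A + A'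
  have hpt1 : ∀ q, P q ≤ A q + A' q := by
    intro q
    rw [hP, hA, hA']; dsimp only
    have hd2 : vS (q 2) ≤ vB (q 2) := hdom _
    by_cases hc : q 1 ≤ q 2 ∧ vB (q 0) > vS (q 1)
    · obtain ⟨h21, hbs⟩ := hc
      have hS12 : vS (q 1) ≤ vS (q 2) := hS h21
      have hq2 : vS (q 1) ≤ vB (q 2) := le_trans hS12 hd2
      rw [if_pos ⟨h21, hbs⟩]
      by_cases hbp : vB (q 2) ≤ vB (q 0)
      · rw [if_pos ⟨hbp, hq2⟩]
        split_ifs with h' <;> [linarith [h'.2]; linarith]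
      · push_neg at hbp
        rw [if_neg, if_pos ⟨le_of_lt hbp, le_of_lt hbs⟩]
        · linarith
        · intro hcon; exact absurd hcon.1 (not_le.mpr hbp)
    · rw [if_neg hc]
      have n1 : (0:ℝ) ≤
          if vB (q 0) ≥ vB (q 2) ∧ vB (q 2) ≥ vS (q 1) then vB (q 0) - vS (q 1) else 0 := by
        split_ifs with h
        · linarith [h.1, h.2]
        · exact le_rfl
      have n2 : (0:ℝ) ≤
          if vB (q 2) ≥ vB (q 0) ∧ vB (q 0) ≥ vS (q 1) then vB (q 2) - vS (q 1) else 0 := by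
        split_ifs with h
        · linarith [h.1, h.2]
        · exact le_rfl
      linarith
  -- pointwise inequality 2 : (Opt + Opt')/2 ≤ P + P'
  have hpt2 : ∀ q, (Opt q + Opt' q) / 2 ≤ P q + P' q := by
    intro q
    have hPq := hP0 q
    have hP'q := hP'0 q
    by_cases h : q 1 ≤ q 2
    · have hS12 : vS (q 1) ≤ vS (q 2) := hS h
      have hOO : Opt' q ≤ Opt q := by
        rw [hOpt, hOpt']; dsimp only; split_ifs <;> linarith
      have hOP : Opt q ≤ P q := by
        rw [hOpt, hP]; dsimp only
        by_cases hb : vB (q 0) > vS (q 1)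
        · rw [if_pos hb, if_pos ⟨h, hb⟩]
        · rw [if_neg hb]
          split_ifs with h' <;> [linarith [h'.2]; linarith]
      linarith
    · push_neg at h
      have h' : q 2 ≤ q 1 := le_of_lt h
      have hS21 : vS (q 2) ≤ vS (q 1) := hS h'
      have hOO : Opt q ≤ Opt' q := by
        rw [hOpt, hOpt']; dsimp only; split_ifs <;> linarith
      have hOP : Opt' q ≤ P' q := by
        rw [hOpt', hP']; dsimp only
        by_cases hb : vB (q 0) > vS (q 2)
        · rw [if_pos hb, if_pos ⟨h', hb⟩]
        · rw [if_neg hb]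
          split_ifs with h'' <;> [linarith [h''.2]; linarith]
      linarith
  -- integral chain
  have h1 : ∫ q, P q ∂π ≤ ∫ q, A q ∂π + ∫ q, A' q ∂π := by
    rw [← integral_add hIA hIA']
    exact integral_mono hIP (hIA.add hIA') hpt1
  have h2 : ∫ q, Opt q ∂π ≤ ∫ q, P q ∂π + ∫ q, P' q ∂π := by
    have hle : ∫ q, (Opt q + Opt' q) / 2 ∂π ≤ ∫ q, (P q + P' q) ∂π :=
      integral_mono ((hIOpt.add hIOpt').div_const 2) (hIP.add hIP') hpt2
    rw [integral_div, integral_add hIOpt hIOpt', hswapO, integral_add hIP hIP'] at hle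
    linarith
  rw [hswapA] at h1
  rw [hswapP] at h2
  show (1 / 4 : ℝ) * (∫ q, Opt q ∂π) ≤ ∫ q, A q ∂π
  linarith
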